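/- Let G be a finite simple connected graph with exactly n ≥ 4 edges such that G has exactly one vertex of degree one, exactly one vertex of degree three, and all other vertices have degree two. Then G is isomorphic to the tadpole graph T_{n,i} for some i with 3 ≤ i < n. -/

import Mathlib

open scoped Classical

noncomputable section

/-- The term `|f x - f y| ^ p` as a function on unordered pairs. -/
noncomputable def edgeTerm {V : Type*} (p : ℝ) (f : V → ℝ) : Sym2 V → ℝ :=
  Sym2.lift ⟨fun x y => |f x - f y| ^ p, fun x y => by dsimp only; rw [abs_sub_comm]⟩

/-- The `p`-Rayleigh quotient of a function on a finite graph. -/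
noncomputable def rayleigh {V : Type*} [Fintype V] [DecidableEq V] (G : SimpleGraph V)
    (p : ℝ) (f : V → ℝ) : ℝ :=
  (∑ e ∈ G.edgeFinset, edgeTerm p f e) / ∑ v, |f v| ^ p

/-- The first `p`-Dirichlet eigenvalue: infimum of the Rayleigh quotient over nonzero
functions vanishing on the boundary (vertices of degree one). -/
noncomputable def lambda1 {V : Type*} [Fintype V] [DecidableEq V] (G : SimpleGraph V)
    (p : ℝ) : ℝ :=
  sInf {r | ∃ f : V → ℝ, f ≠ 0 ∧ (∀ v, G.degree v = 1 → f v = 0) ∧ r = rayleigh G p f}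

/-- The tadpole graph `T_{n,i}` on vertices `0,…,n-1` (vertex `t_k` is `k-1`):
edges `t_k t_{k+1}` for `1 ≤ k ≤ n-1` together with the edge `t_1 t_i`. -/
def tadpole (n i : ℕ) : SimpleGraph (Fin n) :=
  SimpleGraph.fromRel (fun a b => a.val + 1 = b.val ∨ (a.val = 0 ∧ b.val = i - 1))

/-- The path graph on `n` vertices `0,…,n-1`. -/
def pathG (n : ℕ) : SimpleGraph (Fin n) :=
  SimpleGraph.fromRel (fun a b : Fin n => a.val + 1 = b.val)

/-- The set of edges of `G` with exactly one endpoint in `U`. -/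
noncomputable def crossEdges {V : Type*} [Fintype V] [DecidableEq V] (G : SimpleGraph V)
    (U : Finset V) : Finset (Sym2 V) :=
  G.edgeFinset.filter fun e =>
    Sym2.lift ⟨fun x y => (x ∈ U ∧ y ∉ U) ∨ (x ∉ U ∧ y ∈ U),
      fun x y => by simp only [eq_iff_iff]; tauto⟩ e

/-- The Dirichlet Cheeger constant: infimum of `|E(U,Uᶜ)|/|U|` over nonempty sets `U`
of interior vertices (vertices of degree at least two). -/
noncomputable def dCheeger {V : Type*} [Fintype V] [DecidableEq V] (G : SimpleGraph V) : ℝ :=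
  sInf {r | ∃ U : Finset V, U.Nonempty ∧ (∀ v ∈ U, 2 ≤ G.degree v) ∧
    r = ((crossEdges G U).card : ℝ) / U.card}


section TadpoleAux

variable {V : Type*}

/-- Choose a neighbor of `b` different from `a`, if one exists. -/
noncomputable def nxt (G : SimpleGraph V) (a b : V) : V :=
  if h : ∃ c, G.Adj b c ∧ c ≠ a then h.choose else b

lemma nxt_spec (G : SimpleGraph V) {a b : V}
    (h : ∃ c, G.Adj b c ∧ c ≠ a) : G.Adj b (nxt G a b) ∧ nxt G a b ≠ a := by
  rw [nxt, dif_pos h]; exact h.choose_spec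

/-- The non-backtracking walk starting at `u`, then `u'`. -/
noncomputable def wseq (G : SimpleGraph V) (u u' : V) : ℕ → V
  | 0 => u
  | 1 => u'
  | (k+2) => nxt G (wseq G u u' k) (wseq G u u' (k+1))

lemma exists_other [Fintype V] [DecidableEq V] (G : SimpleGraph V) {b : V} (a : V)
    (h : 2 ≤ G.degree b) : ∃ c, G.Adj b c ∧ c ≠ a := by
  obtain ⟨c, hc, hca⟩ := Finset.exists_mem_ne
    (s := G.neighborFinset b) (by rw [G.card_neighborFinset_eq_degree]; omega) a
  exact ⟨c, (SimpleGraph.mem_neighborFinset G b c).1 hc, hca⟩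

lemma two_le_degree_of_adj [Fintype V] [DecidableEq V] (G : SimpleGraph V) {x a b : V}
    (h1 : G.Adj x a) (h2 : G.Adj x b) (hab : a ≠ b) : 2 ≤ G.degree x := by
  rw [← G.card_neighborFinset_eq_degree]
  have hsub : ({a, b} : Finset V) ⊆ G.neighborFinset x := by
    intro y hy
    rw [Finset.mem_insert, Finset.mem_singleton] at hy
    rcases hy with rfl | rfl <;> rw [SimpleGraph.mem_neighborFinset] <;> assumption
  calc 2 = ({a, b} : Finset V).card := (Finset.card_pair hab).symm
    _ ≤ _ := Finset.card_le_card hsub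

lemma three_le_degree_of_adj [Fintype V] [DecidableEq V] (G : SimpleGraph V) {x a b c : V}
    (h1 : G.Adj x a) (h2 : G.Adj x b) (h3 : G.Adj x c)
    (hab : a ≠ b) (hac : a ≠ c) (hbc : b ≠ c) : 3 ≤ G.degree x := by
  rw [← G.card_neighborFinset_eq_degree]
  have hsub : ({a, b, c} : Finset V) ⊆ G.neighborFinset x := by
    intro y hy
    rw [Finset.mem_insert, Finset.mem_insert, Finset.mem_singleton] at hy
    rcases hy with rfl | rfl | rfl <;> rw [SimpleGraph.mem_neighborFinset] <;> assumption
  have hc3 : ({a, b, c} : Finset V).card = 3 := by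
    rw [Finset.card_insert_of_notMem (by simp [hab, hac]),
      Finset.card_insert_of_notMem (by simp [hbc]), Finset.card_singleton]
  calc 3 = ({a, b, c} : Finset V).card := hc3.symm
    _ ≤ _ := Finset.card_le_card hsub

end TadpoleAux


private lemma tadpole_card_V {V : Type*} [Fintype V] [DecidableEq V]
    (G : SimpleGraph V) (n : ℕ) (hcard : G.edgeFinset.card = n)
    (u w : V) (huw : u ≠ w) (hu1 : G.degree u = 1) (hw3 : G.degree w = 3)
    (hother : ∀ x : V, x ≠ u → x ≠ w → G.degree x = 2) :
    Fintype.card V = n := by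
  -- cardinality of V
  have hV2 : 2 ≤ Fintype.card V := Fintype.one_lt_card_iff.2 ⟨u, w, huw⟩
  have hsub : ({u, w} : Finset V) ⊆ Finset.univ := Finset.subset_univ _
  have h1 : ∑ x ∈ Finset.univ \ {u, w}, G.degree x = (Fintype.card V - 2) * 2 := by
    rw [Finset.sum_congr rfl (fun x hx => ?_), Finset.sum_const, Finset.card_sdiff_of_subset hsub,
      Finset.card_pair huw, Finset.card_univ, smul_eq_mul]
    rw [Finset.mem_sdiff, Finset.mem_insert, Finset.mem_singleton] at hx
    push_neg at hx
    exact hother x hx.2.1 hx.2.2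
  have h2 : ∑ x ∈ ({u, w} : Finset V), G.degree x = 4 := by
    rw [Finset.sum_pair huw, hu1, hw3]
  have key : (Fintype.card V - 2) * 2 + 4 = 2 * n := by
    rw [← h1, ← h2, Finset.sum_sdiff hsub, G.sum_degrees_eq_twice_card_edges, hcard]
  have hcardV : Fintype.card V = n := by omega
  exact hcardV

private lemma tadpole_exists_walk {V : Type*} [Fintype V] [DecidableEq V]
    (G : SimpleGraph V) (u w : V) (huw : u ≠ w) (hu1 : G.degree u = 1)
    (hw3 : G.degree w = 3) (hother : ∀ x : V, x ≠ u → x ≠ w → G.degree x = 2) :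
    ∃ (v : ℕ → V) (K d : ℕ), v 0 = u ∧ v d = w ∧ v K = v d ∧ d < K ∧ 1 ≤ d ∧ d + 3 ≤ K ∧
      (∀ p q, p < K → q < K → v p = v q → p = q) ∧
      (∀ m, m + 1 ≤ K → G.Adj (v m) (v (m+1))) := by
  have hdeg2 : ∀ x : V, x ≠ u → 2 ≤ G.degree x := by
    intro x hx
    rcases eq_or_ne x w with rfl | hxw
    · omega
    · rw [hother x hx hxw]
  -- the walk
  obtain ⟨u', huu'⟩ := (G.degree_pos_iff_exists_adj u).1 (by omega)
  have hv0 : wseq G u u' 0 = u := rfl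
  have hv1 : wseq G u u' 1 = u' := rfl
  have hvstep : ∀ k, wseq G u u' (k+2) = nxt G (wseq G u u' k) (wseq G u u' (k+1)) :=
    fun k => rfl
  obtain ⟨v, hvdef⟩ : ∃ f : ℕ → V, f = wseq G u u' := ⟨_, rfl⟩
  rw [← hvdef] at hv0 hv1 hvstep
  -- first repetition
  have hex : ∃ k, ∃ j, j < k ∧ v j = v k := by
    obtain ⟨a, b, hab, hvab⟩ := Fintype.exists_ne_map_eq_of_card_lt
      (fun m : Fin (Fintype.card V + 1) => v m.val) (by simp)
    rcases lt_or_gt_of_ne hab with h | h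
    · exact ⟨b.val, a.val, h, hvab⟩
    · exact ⟨a.val, b.val, h, hvab.symm⟩
  obtain ⟨K, hKdef⟩ : ∃ k, k = Nat.find hex := ⟨_, rfl⟩
  obtain ⟨d, hdK, hvd⟩ := Nat.find_spec hex
  rw [← hKdef] at hdK hvd
  have hmin : ∀ m, m < K → ∀ j, j < m → v j ≠ v m := by
    intro m hm j hj heq
    exact Nat.find_min hex (hKdef ▸ hm) ⟨j, hj, heq⟩
  clear hKdef
  have hinj : ∀ p q, p < K → q < K → v p = v q → p = q := by
    intro p q hp hq h
    rcases lt_trichotomy p q with h' | h' | h'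
    · exact absurd h (hmin q hq p h')
    · exact h'
    · exact absurd h.symm (hmin p hp q h')
  -- walk validity
  have hwalk : ∀ m, m + 1 ≤ K → G.Adj (v m) (v (m+1)) ∧ (1 ≤ m → v (m+1) ≠ v (m-1)) := by
    intro m
    induction m with
    | zero =>
      intro _
      refine ⟨?_, fun h => absurd h (by omega)⟩
      show G.Adj (v 0) (v 1)
      rw [hv0, hv1]
      exact huu'
    | succ m ih =>
      intro h
      obtain ⟨hadj, -⟩ := ih (by omega)
      have hne_u : v (m+1) ≠ u := by
        intro hq
        exact hmin (m+1) (by omega) 0 (by omega) (hv0.trans hq.symm)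
      have hexc : ∃ c, G.Adj (v (m+1)) c ∧ c ≠ v m := exists_other G (v m) (hdeg2 _ hne_u)
      have hns := nxt_spec G hexc
      rw [← hvstep m] at hns
      refine ⟨hns.1, fun _ => ?_⟩
      simpa using hns.2
  have hK2 : 2 ≤ K := by
    rcases Nat.lt_or_ge K 2 with h | h
    · exfalso
      have hd0 : d = 0 ∧ K = 1 := by omega
      obtain ⟨rfl, hk1⟩ := hd0
      rw [hk1] at hvd
      rw [hv0, hv1] at hvd
      exact huu'.ne hvd
    · exact h
  have hadjK : G.Adj (v (K-1)) (v K) := by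
    have h := (hwalk (K-1) (by omega)).1
    rwa [show K - 1 + 1 = K by omega] at h
  have hnbK : v K ≠ v (K-2) := by
    have h := (hwalk (K-1) (by omega)).2 (by omega)
    rwa [show K - 1 + 1 = K by omega, show K - 1 - 1 = K - 2 by omega] at h
  have hdne1 : d ≠ K - 1 := by
    intro h
    rw [h] at hvd
    rw [hvd] at hadjK
    exact G.loopless.irrefl _ hadjK
  have hdne2 : d ≠ K - 2 := by
    intro h
    rw [h] at hvd
    exact hnbK hvd.symm
  have hd3 : d + 3 ≤ K := by omega
  -- v d = w
  have hdw : v d = w := by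
    by_contra hne
    rcases Nat.eq_zero_or_pos d with rfl | hd1
    · have ha1 : G.Adj u (v 1) := by rw [hv1]; exact huu'
      have ha2 : G.Adj u (v (K-1)) := by
        rw [← hv0, hvd]
        exact hadjK.symm
      have hne12 : v 1 ≠ v (K-1) := by
        intro h
        have := hinj 1 (K-1) (by omega) (by omega) h
        omega
      have := two_le_degree_of_adj G ha1 ha2 hne12
      omega
    · have hdu : v d ≠ u := by
        intro h
        exact hmin d hdK 0 hd1 (hv0.trans h.symm)
      have hdeg2' : G.degree (v d) = 2 := hother _ hdu hne
      have ha1 : G.Adj (v d) (v (d-1)) := by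
        have h := (hwalk (d-1) (by omega)).1
        rw [show d - 1 + 1 = d by omega] at h
        exact h.symm
      have ha2 : G.Adj (v d) (v (d+1)) := (hwalk d (by omega)).1
      have ha3 : G.Adj (v d) (v (K-1)) := by
        rw [hvd]
        exact hadjK.symm
      have hn1 : v (d-1) ≠ v (d+1) := by
        intro h
        exact (hwalk d (by omega)).2 hd1 h.symm
      have hn2 : v (d-1) ≠ v (K-1) := by
        intro h
        have := hinj (d-1) (K-1) (by omega) (by omega) h
        omega
      have hn3 : v (d+1) ≠ v (K-1) := by
        intro h
        have := hinj (d+1) (K-1) (by omega) (by omega) h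
        omega
      have := three_le_degree_of_adj G ha1 ha2 ha3 hn1 hn2 hn3
      omega
  have hd1 : 1 ≤ d := by
    rcases Nat.eq_zero_or_pos d with rfl | h
    · exact absurd (hv0.symm.trans hdw) huw
    · exact h
  have hvK : v K = v d := hvd.symm
  exact ⟨v, K, d, hv0, hdw, hvK, hdK, hd1, hd3, hinj, fun m hm => (hwalk m hm).1⟩

private lemma tadpole_walk_count {V : Type*} [Fintype V] [DecidableEq V]
    (G : SimpleGraph V) (n : ℕ) (hn : 4 ≤ n) (hcard : G.edgeFinset.card = n)
    (hconn : G.Connected) (u w : V) (huw : u ≠ w) (hu1 : G.degree u = 1)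
    (hw3 : G.degree w = 3) (hother : ∀ x : V, x ≠ u → x ≠ w → G.degree x = 2)
    (v : ℕ → V) (K d : ℕ) (hv0 : v 0 = u) (hdw : v d = w) (hvK : v K = v d)
    (hdK : d < K) (hd1 : 1 ≤ d) (hd3 : d + 3 ≤ K)
    (hinj : ∀ p q, p < K → q < K → v p = v q → p = q)
    (hadj : ∀ m, m + 1 ≤ K → G.Adj (v m) (v (m+1))) :
    K = n ∧ ∀ p q : ℕ, p < n → q < n →
      (G.Adj (v p) (v q) ↔
        (p + 1 = q ∨ q + 1 = p ∨ (p = n - 1 ∧ q = d) ∨ (q = n - 1 ∧ p = d))) := by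
  have hcardV : Fintype.card V = n := tadpole_card_V G n hcard u w huw hu1 hw3 hother
  -- edges of the walk
  obtain ⟨e, hedef⟩ : ∃ f : ℕ → Sym2 V, f = fun j => s(v j, v (j+1)) := ⟨_, rfl⟩
  have heapp : ∀ j, e j = s(v j, v (j+1)) := fun j => by rw [hedef]
  have hedge : ∀ j, j + 1 ≤ K → e j ∈ G.edgeFinset := by
    intro j hj
    rw [heapp, SimpleGraph.mem_edgeFinset, SimpleGraph.mem_edgeSet]
    exact hadj j hj
  have hedistinct : ∀ j j', j < K → j' < K → e j = e j' → j = j' := by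
    have main : ∀ j j', j < j' → j' < K → e j ≠ e j' := by
      intro j j' hjj' hj' heq
      rw [heapp, heapp] at heq
      rcases Nat.lt_or_ge (j' + 1) K with hlt | hge
      · rcases Sym2.eq_iff.1 heq with ⟨hA, hB⟩ | ⟨hA, hB⟩
        · have := hinj j j' (by omega) (by omega) hA
          omega
        · have := hinj j (j'+1) (by omega) (by omega) hA
          omega
      · have hj'K : j' + 1 = K := by omega
        rw [hj'K, hvK] at heq
        rcases Sym2.eq_iff.1 heq with ⟨hA, hB⟩ | ⟨hA, hB⟩
        · have := hinj j j' (by omega) (by omega) hA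
          omega
        · have e1 := hinj j d (by omega) (by omega) hA
          have e2 := hinj (j+1) j' (by omega) (by omega) hB
          omega
    intro j j' hj hj' heq
    rcases lt_trichotomy j j' with h | h | h
    · exact absurd heq (main j j' h hj')
    · exact h
    · exact absurd heq.symm (main j' j h hj)
  have hmem : ∀ m j, m < K → j < K →
      (v m ∈ e j ↔ (m = j ∨ (j + 1 < K ∧ m = j + 1) ∨ (j + 1 = K ∧ m = d))) := by
    intro m j hm hj
    rw [heapp, Sym2.mem_iff]
    rcases Nat.lt_or_ge (j + 1) K with hlt | hge
    · constructor
      · rintro (h | h)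
        · exact Or.inl (hinj m j hm hj h)
        · exact Or.inr (Or.inl ⟨hlt, hinj m (j+1) hm hlt h⟩)
      · rintro (rfl | ⟨-, rfl⟩ | ⟨hK1, -⟩)
        · exact Or.inl rfl
        · exact Or.inr rfl
        · omega
    · have hjK : j + 1 = K := by omega
      rw [hjK, hvK]
      constructor
      · rintro (h | h)
        · exact Or.inl (hinj m j hm hj h)
        · exact Or.inr (Or.inr ⟨rfl, hinj m d hm hdK h⟩)
      · rintro (rfl | ⟨h, -⟩ | ⟨-, rfl⟩)
        · exact Or.inl rfl
        · omega
        · exact Or.inr rfl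
  -- per-vertex incidence counts
  have hA : ∀ m, m < K →
      ((Finset.range K).filter (fun j => v m ∈ e j)).card = G.degree (v m) := by
    intro m hm
    by_cases hm0 : m = 0
    · have hset : (Finset.range K).filter (fun j => v 0 ∈ e j) = {0} := by
        ext j
        simp only [Finset.mem_filter, Finset.mem_range, Finset.mem_singleton]
        constructor
        · rintro ⟨hj, hmem'⟩
          rw [hmem 0 j (by omega) hj] at hmem'
          omega
        · rintro rfl
          exact ⟨by omega, (hmem 0 0 (by omega) (by omega)).2 (by omega)⟩
      rw [hm0, hset, Finset.card_singleton, hv0, hu1]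
    · by_cases hmd : m = d
      · have hset : (Finset.range K).filter (fun j => v m ∈ e j) = {d - 1, d, K - 1} := by
          ext j
          simp only [Finset.mem_filter, Finset.mem_range, Finset.mem_insert,
            Finset.mem_singleton]
          constructor
          · rintro ⟨hj, hmem'⟩
            rw [hmem m j hm hj] at hmem'
            omega
          · intro hj
            have hjK : j < K := by omega
            refine ⟨hjK, (hmem m j hm hjK).2 ?_⟩
            omega
        rw [hset, Finset.card_insert_of_notMem (by simp; omega),
          Finset.card_insert_of_notMem (by simp; omega), Finset.card_singleton,
          hmd, hdw, hw3]
      · have hset : (Finset.range K).filter (fun j => v m ∈ e j) = {m - 1, m} := by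
          ext j
          simp only [Finset.mem_filter, Finset.mem_range, Finset.mem_insert,
            Finset.mem_singleton]
          constructor
          · rintro ⟨hj, hmem'⟩
            rw [hmem m j hm hj] at hmem'
            omega
          · intro hj
            have hjK : j < K := by omega
            refine ⟨hjK, (hmem m j hm hjK).2 ?_⟩
            omega
        have hmu : v m ≠ u := by
          intro h
          have := hinj m 0 hm (by omega) (h.trans hv0.symm)
          omega
        have hmw : v m ≠ w := by
          intro h
          have := hinj m d hm hdK (h.trans hdw.symm)
          omega
        rw [hset, Finset.card_insert_of_notMem (by simp; omega), Finset.card_singleton,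
          hother _ hmu hmw]
  -- the walk-edge set
  obtain ⟨E', hE'def⟩ : ∃ s : Finset (Sym2 V), s = (Finset.range K).image e := ⟨_, rfl⟩
  have hE'sub : E' ⊆ G.edgeFinset := by
    intro ed hed
    rw [hE'def, Finset.mem_image] at hed
    obtain ⟨j, hj, rfl⟩ := hed
    rw [Finset.mem_range] at hj
    exact hedge j (by omega)
  have hinjOn : ∀ s : Finset ℕ, s ⊆ Finset.range K → Set.InjOn e s := by
    intro s hs x hx y hy hxy
    exact hedistinct x y (Finset.mem_range.1 (hs hx)) (Finset.mem_range.1 (hs hy)) hxy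
  have hE'card : E'.card = K := by
    rw [hE'def, Finset.card_image_of_injOn (hinjOn _ (le_refl _)), Finset.card_range]
  have hcover : ∀ m, m < K → ∀ y, G.Adj (v m) y → s(v m, y) ∈ E' := by
    intro m hm y hy
    have hsub2 : E'.filter (fun ed => v m ∈ ed) ⊆ G.edgeFinset.filter (fun ed => v m ∈ ed) :=
      Finset.filter_subset_filter _ hE'sub
    have hcardE : (E'.filter (fun ed => v m ∈ ed)).card = G.degree (v m) := by
      rw [hE'def, Finset.filter_image,
        Finset.card_image_of_injOn (hinjOn _ (Finset.filter_subset _ _)), hA m hm]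
    have hcardG : (G.edgeFinset.filter (fun ed => v m ∈ ed)).card = G.degree (v m) := by
      rw [← SimpleGraph.incidenceFinset_eq_filter, SimpleGraph.card_incidenceFinset_eq_degree]
    have heqset : G.edgeFinset.filter (fun ed => v m ∈ ed) = E'.filter (fun ed => v m ∈ ed) :=
      (Finset.eq_of_subset_of_card_le hsub2 (by omega)).symm
    have hmem' : s(v m, y) ∈ G.edgeFinset.filter (fun ed => v m ∈ ed) := by
      rw [Finset.mem_filter, SimpleGraph.mem_edgeFinset, SimpleGraph.mem_edgeSet]
      exact ⟨hy, Sym2.mem_mk_left _ _⟩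
    have := heqset ▸ hmem'
    exact Finset.mem_of_mem_filter _ this
  -- the vertex set of the walk is everything
  obtain ⟨S, hSdef⟩ : ∃ s : Finset V, s = (Finset.range K).image v := ⟨_, rfl⟩
  have hvS : ∀ m, m < K → v m ∈ S := by
    intro m hm
    rw [hSdef]
    exact Finset.mem_image.2 ⟨m, Finset.mem_range.2 hm, rfl⟩
  have hclosed : ∀ x, x ∈ S → ∀ y, G.Adj x y → y ∈ S := by
    intro x hx y hxy
    rw [hSdef, Finset.mem_image] at hx
    obtain ⟨m, hm, rfl⟩ := hx
    rw [Finset.mem_range] at hm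
    have hcv := hcover m hm y hxy
    rw [hE'def, Finset.mem_image] at hcv
    obtain ⟨j, hj, hej⟩ := hcv
    rw [Finset.mem_range] at hj
    have hyj : y ∈ e j := by
      rw [hej]
      exact Sym2.mem_mk_right _ _
    rw [heapp, Sym2.mem_iff] at hyj
    rcases hyj with rfl | rfl
    · exact hvS j hj
    · rcases Nat.lt_or_ge (j+1) K with h | h
      · exact hvS (j+1) h
      · rw [show j + 1 = K by omega, hvK]
        exact hvS d hdK
  have hSuniv : S = Finset.univ := by
    apply Finset.eq_univ_of_forall
    intro y
    obtain ⟨p⟩ := hconn.preconnected u y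
    have hWS : ∀ (a b : V), G.Walk a b → a ∈ S → b ∈ S := by
      intro a b q
      induction q with
      | nil => exact id
      | cons h q ih => exact fun ha => ih (hclosed _ ha _ h)
    exact hWS u y p (hv0 ▸ hvS 0 (by omega))
  have hKn : K = n := by
    have hSc : S.card = K := by
      rw [hSdef, Finset.card_image_of_injOn (fun x hx y hy hxy =>
        hinj x y (Finset.mem_range.1 hx) (Finset.mem_range.1 hy) hxy), Finset.card_range]
    rw [hSuniv, Finset.card_univ, hcardV] at hSc
    omega
  have hEedge : E' = G.edgeFinset := by
    apply Finset.eq_of_subset_of_card_le hE'sub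
    rw [hcard]
    omega
  -- adjacency characterization
  have hAdjIff : ∀ p q : ℕ, p < n → q < n →
      (G.Adj (v p) (v q) ↔
        (p + 1 = q ∨ q + 1 = p ∨ (p = n - 1 ∧ q = d) ∨ (q = n - 1 ∧ p = d))) := by
    intro p q hp hq
    constructor
    · intro h
      have hcv := hcover p (by omega) _ h
      rw [hE'def, Finset.mem_image] at hcv
      obtain ⟨j, hj, hej⟩ := hcv
      rw [Finset.mem_range] at hj
      rw [heapp] at hej
      rcases Nat.lt_or_ge (j+1) K with hlt | hge
      · rcases Sym2.eq_iff.1 hej with ⟨hA1, hB1⟩ | ⟨hA1, hB1⟩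
        · have e1 := hinj j p (by omega) (by omega) hA1
          have e2 := hinj (j+1) q (by omega) (by omega) hB1
          omega
        · have e1 := hinj j q (by omega) (by omega) hA1
          have e2 := hinj (j+1) p (by omega) (by omega) hB1
          omega
      · have hjK : j + 1 = K := by omega
        rw [hjK, hvK] at hej
        rcases Sym2.eq_iff.1 hej with ⟨hA1, hB1⟩ | ⟨hA1, hB1⟩
        · have e1 := hinj j p (by omega) (by omega) hA1
          have e2 := hinj d q hdK (by omega) hB1
          omega
        · have e1 := hinj j q (by omega) (by omega) hA1
          have e2 := hinj d p hdK (by omega) hB1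
          omega
    · intro h
      have hmemE' : s(v p, v q) ∈ E' := by
        rw [hE'def, Finset.mem_image]
        rcases h with h | h | ⟨h1, h2⟩ | ⟨h1, h2⟩
        · refine ⟨p, Finset.mem_range.2 (by omega), ?_⟩
          rw [heapp, h]
        · refine ⟨q, Finset.mem_range.2 (by omega), ?_⟩
          rw [heapp, h, Sym2.eq_swap]
        · refine ⟨n - 1, Finset.mem_range.2 (by omega), ?_⟩
          rw [heapp, show n - 1 + 1 = K by omega, hvK, h1, h2]
        · refine ⟨n - 1, Finset.mem_range.2 (by omega), ?_⟩
          rw [heapp, show n - 1 + 1 = K by omega, hvK, h1, h2, Sym2.eq_swap]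
      rw [hEedge, SimpleGraph.mem_edgeFinset, SimpleGraph.mem_edgeSet] at hmemE'
      exact hmemE'
  exact ⟨hKn, hAdjIff⟩

private lemma tadpole_arith1 (p q n d : ℕ) (hp : p < n) (hq : q < n) (hd1 : 1 ≤ d)
    (hd3 : d + 3 ≤ n)
    (h : n - 1 - p + 1 = n - 1 - q ∨ n - 1 - q + 1 = n - 1 - p ∨
      (n - 1 - p = n - 1 ∧ n - 1 - q = d) ∨ (n - 1 - q = n - 1 ∧ n - 1 - p = d)) :
    p ≠ q ∧ ((p + 1 = q ∨ (p = 0 ∧ q = n - d - 1)) ∨ (q + 1 = p ∨ (q = 0 ∧ p = n - d - 1))) := by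
  omega

private lemma tadpole_arith2 (p q n d : ℕ) (hp : p < n) (hq : q < n) (hd1 : 1 ≤ d)
    (hd3 : d + 3 ≤ n) (hne : p ≠ q)
    (h : (p + 1 = q ∨ (p = 0 ∧ q = n - d - 1)) ∨ (q + 1 = p ∨ (q = 0 ∧ p = n - d - 1))) :
    n - 1 - p + 1 = n - 1 - q ∨ n - 1 - q + 1 = n - 1 - p ∨
      (n - 1 - p = n - 1 ∧ n - 1 - q = d) ∨ (n - 1 - q = n - 1 ∧ n - 1 - p = d) := by
  omega

/-- A connected graph with `n ≥ 4` edges, exactly one vertex of degree one, exactly one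
vertex of degree three and all other vertices of degree two is a tadpole graph `T_{n,i}`
for some `3 ≤ i < n`. -/
theorem degree_sequence_tadpole {V : Type*} [Fintype V] [DecidableEq V]
    (G : SimpleGraph V) (n : ℕ) (hn : 4 ≤ n) (hcard : G.edgeFinset.card = n)
    (hconn : G.Connected)
    (hdeg : ∃ u w : V, u ≠ w ∧ G.degree u = 1 ∧ G.degree w = 3 ∧
      ∀ v : V, v ≠ u → v ≠ w → G.degree v = 2) :
    ∃ i : ℕ, 3 ≤ i ∧ i < n ∧ Nonempty (G ≃g tadpole n i) := by
  classical
  obtain ⟨u, w, huw, hu1, hw3, hother⟩ := hdeg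
  obtain ⟨v, K, d, hv0, hdw, hvK, hdK, hd1, hd3, hinj, hadj⟩ :=
    tadpole_exists_walk G u w huw hu1 hw3 hother
  obtain ⟨hKn, hAdjIff⟩ :=
    tadpole_walk_count G n hn hcard hconn u w huw hu1 hw3 hother v K d hv0 hdw hvK hdK hd1
      hd3 hinj hadj
  subst hKn
  have hcardV : Fintype.card V = K := tadpole_card_V G K hcard u w huw hu1 hw3 hother
  refine ⟨K - d, by omega, by omega, ?_⟩
  have hψinj : Function.Injective (fun a : Fin K => v (K - 1 - a.val)) := by
    intro a b hab
    have ha := a.isLt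
    have hb := b.isLt
    have := hinj (K - 1 - a.val) (K - 1 - b.val) (by omega) (by omega) hab
    exact Fin.ext (by omega)
  have hbij : Function.Bijective (fun a : Fin K => v (K - 1 - a.val)) :=
    (Fintype.bijective_iff_injective_and_card _).2 ⟨hψinj, by simp [hcardV]⟩
  have hmain : ∀ a b : Fin K,
      G.Adj (Equiv.ofBijective _ hbij a) (Equiv.ofBijective _ hbij b) ↔
        (tadpole K (K - d)).Adj a b := by
    intro a b
    have ha := a.isLt
    have hb := b.isLt
    show G.Adj (v (K - 1 - a.val)) (v (K - 1 - b.val)) ↔ _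
    rw [hAdjIff (K - 1 - a.val) (K - 1 - b.val) (by omega) (by omega)]
    rw [tadpole, SimpleGraph.fromRel_adj]
    constructor
    · intro h
      obtain ⟨hne, h2⟩ := tadpole_arith1 a.val b.val K d ha hb hd1 (by omega) h
      exact ⟨fun hh => hne (congrArg Fin.val hh), h2⟩
    · rintro ⟨hne, h⟩
      exact tadpole_arith2 a.val b.val K d ha hb hd1 (by omega) (fun hh => hne (Fin.ext hh)) h
  have hiso : tadpole K (K - d) ≃g G := ⟨Equiv.ofBijective _ hbij, fun {a b} => hmain a b⟩
  exact ⟨hiso.symm⟩
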